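/- Let k ≥ 0 and (M,w_d) a finite pointed model with worlds W, and let x,y ∈ W \ {w_d} be distinct worlds with b(x) ≥ b(y) ≥ 0 and x k'-bisimilar to y for k' = b(y). Let (M',w_d) be obtained by deleting y and redirecting all incoming edges of y to x (i.e., W' = W \ {y}, R'_i = (R_i ∩ (W'×W')) ∪ {(w,x) | w R_i y}, V'(p) = V(p) ∩ W'). Then (M,w_d) is k-bisimilar to (M',w_d). -/

import Mathlib

/-- A finite pointed Kripke model with modality indices `I` and atoms `P`. -/
structure PModel (I P : Type) where
  W : Type
  fin : Finite W
  R : I → W → W → Prop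
  V : P → W → Prop
  d : W

variable {I P : Type}

/-- `h`-bisimilarity between worlds of two models (back-and-forth to depth `h`). -/
def Bisim (M N : PModel I P) : ℕ → M.W → N.W → Prop
  | 0, w, v => ∀ p, M.V p w ↔ N.V p v
  | h+1, w, v => (∀ p, M.V p w ↔ N.V p v)
      ∧ (∀ i w', M.R i w w' → ∃ v', N.R i v v' ∧ Bisim M N h w' v')
      ∧ (∀ i v', N.R i v v' → ∃ w', M.R i w w' ∧ Bisim M N h w' v')

/-- `k`-bisimilarity of pointed models. -/
def PBisim (k : ℕ) (M N : PModel I P) : Prop := Bisim M N k M.d N.d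

/-- Directed paths of length `n`. -/
def Steps (M : PModel I P) : ℕ → M.W → M.W → Prop
  | 0, w, v => w = v
  | n+1, w, v => ∃ u i, M.R i w u ∧ Steps M n u v

/-- Depth of a world: length of a shortest path from the designated world (`⊤` if none). -/
noncomputable def depth (M : PModel I P) (w : M.W) : ℕ∞ :=
  sInf {n : ℕ∞ | ∃ m : ℕ, n = (m : ℕ∞) ∧ Steps M m M.d w}

/-- Bound `b(w) = k − d(w)`, with `⊥` for unreachable worlds. -/
noncomputable def bound (k : ℕ) (M : PModel I P) (w : M.W) : WithBot ℤ :=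
  ENat.recTopCoe (⊥ : WithBot ℤ) (fun n : ℕ => (((k : ℤ) - n : ℤ) : WithBot ℤ)) (depth M w)

/-- The bound as a natural number (meaningful when `0 ≤ bound k M w`). -/
noncomputable def nbound (k : ℕ) (M : PModel I P) (w : M.W) : ℕ :=
  k - (depth M w).toNat
/-- `x` represents `y` : `b(x) ≥ b(y) ≥ 0` and `x ∼_{b(y)} y`. -/
noncomputable def Repr' (k : ℕ) (M : PModel I P) (x y : M.W) : Prop :=
  0 ≤ bound k M y ∧ bound k M y ≤ bound k M x ∧ Bisim M M (nbound k M y) x y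

/-- `x` strictly represents `y`. -/
noncomputable def SRepr (k : ℕ) (M : PModel I P) (x y : M.W) : Prop :=
  Repr' k M x y ∧ bound k M y < bound k M x

/-- Maximal representatives. -/
noncomputable def maxRepr (k : ℕ) (M : PModel I P) : Set M.W :=
  {x | 0 ≤ bound k M x ∧ ∀ y, ¬ SRepr k M y x}

/-- Representative class `[x]_{b(x)}`. -/
noncomputable def reprClass (k : ℕ) (M : PModel I P) (x : M.W) : Set M.W :=
  {y | Bisim M M (nbound k M x) x y}


theorem bisim_refl (M : PModel I P) : ∀ (h : ℕ) (w : M.W), Bisim M M h w w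
  | 0, w => fun p => Iff.rfl
  | h+1, w => ⟨fun p => Iff.rfl,
      fun i w' hr => ⟨w', hr, bisim_refl M h w'⟩,
      fun i w' hr => ⟨w', hr, bisim_refl M h w'⟩⟩

theorem bisim_symm {M N : PModel I P} : ∀ {h : ℕ} {w v}, Bisim M N h w v → Bisim N M h v w
  | 0, w, v, hb => fun p => (hb p).symm
  | h+1, w, v, ⟨ha, hf, hk⟩ =>
    ⟨fun p => (ha p).symm,
     fun i v' hr => (hk i v' hr).imp fun w' ⟨h1, h2⟩ => ⟨h1, bisim_symm h2⟩,
     fun i w' hr => (hf i w' hr).imp fun v' ⟨h1, h2⟩ => ⟨h1, bisim_symm h2⟩⟩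

theorem bisim_trans {M N O : PModel I P} :
    ∀ {h : ℕ} {w v u}, Bisim M N h w v → Bisim N O h v u → Bisim M O h w u
  | 0, w, v, u, h1, h2 => fun p => (h1 p).trans (h2 p)
  | h+1, w, v, u, ⟨ha, hf, hk⟩, ⟨ha', hf', hk'⟩ =>
    ⟨fun p => (ha p).trans (ha' p),
     fun i w' hr => by
       obtain ⟨v', hr', hb⟩ := hf i w' hr
       obtain ⟨u', hr'', hb'⟩ := hf' i v' hr'
       exact ⟨u', hr'', bisim_trans hb hb'⟩,
     fun i u' hr => by
       obtain ⟨v', hr', hb⟩ := hk' i u' hr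
       obtain ⟨w', hr'', hb'⟩ := hk i v' hr'
       exact ⟨w', hr'', bisim_trans hb' hb⟩⟩

theorem bisim_succ {M N : PModel I P} :
    ∀ {h : ℕ} {w v}, Bisim M N (h+1) w v → Bisim M N h w v
  | 0, w, v, hb => hb.1
  | h+1, w, v, ⟨ha, hf, hk⟩ =>
    ⟨ha, fun i w' hr => (hf i w' hr).imp fun v' ⟨h1, h2⟩ => ⟨h1, bisim_succ h2⟩,
         fun i v' hr => (hk i v' hr).imp fun w' ⟨h1, h2⟩ => ⟨h1, bisim_succ h2⟩⟩

theorem bisim_mono {M N : PModel I P} {h' h : ℕ} (hle : h' ≤ h) {w v}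
    (hb : Bisim M N h w v) : Bisim M N h' w v := by
  induction hle with
  | refl => exact hb
  | step _ ih => exact ih (bisim_succ hb)

theorem steps_snoc {M : PModel I P} {i : I} :
    ∀ {m : ℕ} {u v v' : M.W}, Steps M m u v → M.R i v v' → Steps M (m+1) u v'
  | 0, u, v, v', h, hr => by cases h; exact ⟨v', i, hr, rfl⟩
  | m+1, u, v, v', ⟨u', j, hr1, hs⟩, hr => ⟨u', j, hr1, steps_snoc hs hr⟩

theorem depth_le_of_steps {M : PModel I P} {m : ℕ} {w : M.W} (h : Steps M m M.d w) :
    depth M w ≤ (m : ℕ∞) := sInf_le ⟨m, rfl, h⟩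

theorem steps_of_depth {M : PModel I P} {m : ℕ} {w : M.W} (h : depth M w = (m : ℕ∞)) :
    Steps M m M.d w := by
  by_contra hc
  have h1 : ((m : ℕ∞) + 1) ≤ depth M w := by
    apply le_sInf
    rintro _ ⟨m', rfl, hs⟩
    have hle : (m : ℕ∞) ≤ (m' : ℕ∞) := h ▸ depth_le_of_steps hs
    have : m < m' := by
      rcases lt_or_eq_of_le (Nat.cast_le.mp hle) with h' | h'
      · exact h'
      · exact absurd (h' ▸ hs) hc
    exact_mod_cast this
  rw [h] at h1
  exact absurd h1 (by exact_mod_cast Nat.not_succ_le_self m)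

theorem depth_succ_le {M : PModel I P} {i : I} {w w' : M.W} (hr : M.R i w w') :
    depth M w' ≤ depth M w + 1 := by
  rcases eq_or_ne (depth M w) ⊤ with hd | hd
  · simp [hd]
  · obtain ⟨m, hm⟩ := WithTop.ne_top_iff_exists.mp hd
    rw [← hm]
    exact_mod_cast depth_le_of_steps (steps_snoc (steps_of_depth hm.symm) hr)

theorem bound_facts {k : ℕ} {M : PModel I P} {w : M.W} (h0 : 0 ≤ bound k M w) :
    ∃ n : ℕ, depth M w = (n : ℕ∞) ∧ n ≤ k := by
  unfold bound at h0
  rcases eq_or_ne (depth M w) ⊤ with hd | hd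
  · rw [hd] at h0; simp at h0
  · obtain ⟨n, hn⟩ := WithTop.ne_top_iff_exists.mp hd
    have hn' : depth M w = ((n : ℕ) : ℕ∞) := hn.symm
    rw [hn', ENat.recTopCoe_coe] at h0
    refine ⟨n, hn', ?_⟩
    have : (0 : ℤ) ≤ (k : ℤ) - n := by exact_mod_cast h0
    omega

theorem depth_le_of_bound_le {k : ℕ} {M : PModel I P} {x y : M.W} {n : ℕ}
    (hdy : depth M y = (n : ℕ∞)) (hb : bound k M y ≤ bound k M x) :
    depth M x ≤ depth M y := by
  unfold bound at hb
  rw [hdy, ENat.recTopCoe_coe] at hb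
  rcases eq_or_ne (depth M x) ⊤ with hd | hd
  · rw [hd] at hb; simp at hb
  · obtain ⟨m, hm⟩ := WithTop.ne_top_iff_exists.mp hd
    have hm' : depth M x = ((m : ℕ) : ℕ∞) := hm.symm
    rw [hm', ENat.recTopCoe_coe] at hb
    have h1 : (k : ℤ) - n ≤ (k : ℤ) - m := by exact_mod_cast hb
    have : m ≤ n := by omega
    rw [hm', hdy]
    exact_mod_cast this

theorem nbound_eq {k : ℕ} {M : PModel I P} {y : M.W} {n : ℕ} (hdy : depth M y = (n : ℕ∞)) :
    nbound k M y = k - n := by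
  simp [nbound, hdy]

theorem key_lemma (k : ℕ) (M : PModel I P) (x y : M.W) (hxy : x ≠ y) (hyd : y ≠ M.d)
    (ny : ℕ) (hdy : depth M y = (ny : ℕ∞))
    (hbis : ∀ h : ℕ, h ≤ k - ny → Bisim M M h x y)
    (hdxy : depth M x ≤ depth M y) :
    ∀ (h : ℕ) (u w : M.W) (hw : w ≠ y), Bisim M M h u w →
      depth M w + (h : ℕ∞) ≤ (k : ℕ∞) →
      Bisim M
        { W := {w : M.W // w ≠ y}
          fin := by have := M.fin; exact Subtype.finite
          R := fun i w v => (M.R i w.1 v.1) ∨ (v.1 = x ∧ M.R i w.1 y)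
          V := fun p w => M.V p w.1
          d := ⟨M.d, Ne.symm hyd⟩ } h u ⟨w, hw⟩ := by
  intro h
  induction h with
  | zero => intro u w hw hb _; exact hb
  | succ h ih =>
    intro u w hw hb hdep
    obtain ⟨ha, hf, hk⟩ := hb
    have hdep' : ∀ w' : M.W, depth M w' ≤ depth M w + 1 → depth M w' + (h : ℕ∞) ≤ (k : ℕ∞) := by
      intro w' hle
      calc depth M w' + (h : ℕ∞) ≤ (depth M w + 1) + h := add_le_add_left hle _
        _ = depth M w + ((h : ℕ∞) + 1) := by ring
        _ ≤ (k : ℕ∞) := by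
            have : ((h : ℕ∞) + 1) = ((h + 1 : ℕ) : ℕ∞) := by push_cast; ring
            rw [this]; exact hdep
    -- budget fact when stepping to y
    have hy_case : ∀ {u' : M.W}, (∃ i, M.R i w y) → Bisim M M h u' y → Bisim M M h u' x ∧
        depth M x + (h : ℕ∞) ≤ (k : ℕ∞) := by
      intro u' ⟨i, hry⟩ hb'
      have hdyb : depth M y + (h : ℕ∞) ≤ (k : ℕ∞) := hdep' y (depth_succ_le hry)
      rw [hdy] at hdyb
      have hnyh : ny + h ≤ k := by exact_mod_cast hdyb
      have hxb : Bisim M M h x y := hbis h (by omega)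
      refine ⟨bisim_trans hb' (bisim_symm hxb), ?_⟩
      exact hdep' x (le_trans hdxy (depth_succ_le hry))
    refine ⟨ha, ?_, ?_⟩
    · intro i u' hr
      obtain ⟨w', hrw, hb'⟩ := hf i u' hr
      by_cases hw' : w' = y
      · subst hw'
        obtain ⟨hbx, hdx⟩ := hy_case ⟨i, hrw⟩ hb'
        exact ⟨⟨x, hxy⟩, Or.inr ⟨rfl, hrw⟩, ih u' x hxy hbx hdx⟩
      · exact ⟨⟨w', hw'⟩, Or.inl hrw,
          ih u' w' hw' hb' (hdep' w' (depth_succ_le hrw))⟩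
    · rintro i ⟨v', hv'⟩ (hr | ⟨hvx, hry⟩)
      · obtain ⟨u', hru, hb'⟩ := hk i v' hr
        exact ⟨u', hru, ih u' v' hv' hb' (hdep' v' (depth_succ_le hr))⟩
      · obtain ⟨u', hru, hb'⟩ := hk i y hry
        obtain ⟨hbx, hdx⟩ := hy_case ⟨i, hry⟩ hb'
        have hvx' : (⟨v', hv'⟩ : {w : M.W // w ≠ y}) = ⟨x, hxy⟩ := Subtype.ext hvx
        rw [hvx']
        exact ⟨u', hru, ih u' x hxy hbx hdx⟩

theorem delete_and_redirect' (k : ℕ) (M : PModel I P) (x y : M.W)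
    (hxy : x ≠ y) (hxd : x ≠ M.d) (hyd : y ≠ M.d)
    (h0 : 0 ≤ bound k M y) (hb : bound k M y ≤ bound k M x)
    (hbis : Bisim M M (nbound k M y) x y) :
    Bisim M
      { W := {w : M.W // w ≠ y}
        fin := by have := M.fin; exact Subtype.finite
        R := fun i w v => (M.R i w.1 v.1) ∨ (v.1 = x ∧ M.R i w.1 y)
        V := fun p w => M.V p w.1
        d := ⟨M.d, Ne.symm hyd⟩ } k M.d ⟨M.d, Ne.symm hyd⟩ := by
  obtain ⟨ny, hdy, hnyk⟩ := bound_facts h0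
  have hnb := nbound_eq (k := k) hdy
  refine key_lemma k M x y hxy hyd ny hdy
    (fun h hh => bisim_mono (hnb ▸ hh) hbis)
    (depth_le_of_bound_le hdy hb) k M.d M.d (Ne.symm hyd) (bisim_refl M k M.d) ?_
  have hd0 : depth M M.d ≤ (0 : ℕ∞) := depth_le_of_steps (m := 0) rfl
  calc depth M M.d + (k : ℕ∞) ≤ 0 + k := add_le_add_left hd0 _
    _ = (k : ℕ∞) := zero_add _

/-- Deleting a represented world `y` and redirecting its incoming edges to `x`
preserves `k`-bisimilarity. -/
theorem delete_and_redirect (k : ℕ) (M : PModel I P) (x y : M.W)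
    (hxy : x ≠ y) (hxd : x ≠ M.d) (hyd : y ≠ M.d)
    (h0 : 0 ≤ bound k M y) (hb : bound k M y ≤ bound k M x)
    (hbis : Bisim M M (nbound k M y) x y) :
    PBisim k M
      { W := {w : M.W // w ≠ y}
        fin := by have := M.fin; exact Subtype.finite
        R := fun i w v => (M.R i w.1 v.1) ∨ (v.1 = x ∧ M.R i w.1 y)
        V := fun p w => M.V p w.1
        d := ⟨M.d, Ne.symm hyd⟩ } := by
  exact delete_and_redirect' k M x y hxy hxd hyd h0 hb hbis
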